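/- Suppose y : I → ℝ is twice differentiable with y > 0 and satisfies y'' + (1/y)(y')² + y y' + 1/2 = 0 on an open interval I, and suppose t = φ(x) is a differentiable function on I with φ'(x) = y(x). Then the function u defined by u(t) = y(φ⁻¹(t))³ satisfies u'' + u' + 3/2 = 0, where φ is assumed to be a bijection onto its image with differentiable inverse. -/

import Mathlib

/-- The generalized Sundman transformation u = y³, dt = y dx maps solutions of
y'' + (1/y)(y')² + y y' + 1/2 = 0 to solutions of u'' + u' + 3/2 = 0. -/
theorem stmt_2 (I : Set ℝ) (hI : IsOpen I) (y φ ψ : ℝ → ℝ)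
    (hpos : ∀ x ∈ I, 0 < y x)
    (hy1 : ∀ x ∈ I, DifferentiableAt ℝ y x)
    (hy2 : ∀ x ∈ I, DifferentiableAt ℝ (deriv y) x)
    (hode : ∀ x ∈ I,
      deriv (deriv y) x + (1 / y x) * (deriv y x) ^ 2 + y x * deriv y x + 1/2 = 0)
    (hφ : ∀ x ∈ I, HasDerivAt φ (y x) x)
    (hinv : ∀ x ∈ I, ψ (φ x) = x)
    (hψ : ∀ t ∈ φ '' I, DifferentiableAt ℝ ψ t) :
    ∀ t ∈ φ '' I,
      deriv (deriv (fun s : ℝ => (y (ψ s)) ^ 3)) t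
        + deriv (fun s : ℝ => (y (ψ s)) ^ 3) t + 3/2 = 0 := by
  -- derivative of the inverse
  have hψd : ∀ x ∈ I, HasDerivAt ψ (1 / y x) (φ x) := by
    intro x hx
    have hy0 : y x ≠ 0 := (hpos x hx).ne'
    have h1 : HasDerivAt ψ (deriv ψ (φ x)) (φ x) := (hψ (φ x) ⟨x, hx, rfl⟩).hasDerivAt
    have h2 := h1.comp x (hφ x hx)
    have hev : id =ᶠ[nhds x] (ψ ∘ φ) := by
      filter_upwards [hI.mem_nhds hx] with x' hx' using (hinv x' hx').symm
    have h3 : HasDerivAt id (deriv ψ (φ x) * y x) x := h2.congr_of_eventuallyEq hev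
    have h4 : deriv ψ (φ x) * y x = 1 := h3.unique (hasDerivAt_id x)
    have h5 : deriv ψ (φ x) = 1 / y x := by
      field_simp at h4 ⊢
      linarith
    rw [← h5]; exact h1
  -- derivative of y ∘ ψ and (deriv y) ∘ ψ
  have hcomp : ∀ x ∈ I, HasDerivAt (fun s => y (ψ s)) (deriv y x * (1 / y x)) (φ x) := by
    intro x hx
    have hy' : HasDerivAt y (deriv y x) (ψ (φ x)) := by
      rw [hinv x hx]; exact (hy1 x hx).hasDerivAt
    exact hy'.comp (φ x) (hψd x hx)
  have hcomp2 : ∀ x ∈ I,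
      HasDerivAt (fun s => deriv y (ψ s)) (deriv (deriv y) x * (1 / y x)) (φ x) := by
    intro x hx
    have hy' : HasDerivAt (deriv y) (deriv (deriv y) x) (ψ (φ x)) := by
      rw [hinv x hx]; exact (hy2 x hx).hasDerivAt
    exact hy'.comp (φ x) (hψd x hx)
  -- first derivative of u
  have hu : ∀ x ∈ I, HasDerivAt (fun s => y (ψ s) ^ 3) (3 * y x * deriv y x) (φ x) := by
    intro x hx
    have hy0 : y x ≠ 0 := (hpos x hx).ne'
    have := (hcomp x hx).fun_pow 3
    refine this.congr_deriv ?_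
    rw [hinv x hx]
    field_simp
    ring
  have hud : ∀ x ∈ I, deriv (fun s => y (ψ s) ^ 3) (φ x) = 3 * y x * deriv y x :=
    fun x hx => (hu x hx).deriv
  -- φ '' I is a neighborhood of each of its points
  have hnbhd : ∀ x ∈ I, φ '' I ∈ nhds (φ x) := by
    intro x hx
    obtain ⟨ε, hε, hball⟩ := Metric.isOpen_iff.mp hI x hx
    set a := x - ε / 2 with ha
    set b := x + ε / 2 with hb
    have hab : Set.Icc a b ⊆ I := by
      intro z hz
      apply hball
      rw [Metric.mem_ball, Real.dist_eq, abs_lt]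
      obtain ⟨h1, h2⟩ := hz
      constructor <;> simp [ha, hb] at h1 h2 ⊢ <;> linarith
    have hcont : ContinuousOn φ (Set.Icc a b) := fun z hz =>
      (hφ z (hab hz)).differentiableAt.continuousAt.continuousWithinAt
    have hmono : StrictMonoOn φ (Set.Icc a b) := by
      apply strictMonoOn_of_deriv_pos (convex_Icc a b) hcont
      intro z hz
      rw [interior_Icc] at hz
      rw [(hφ z (hab (Set.Ioo_subset_Icc_self hz))).deriv]
      exact hpos z (hab (Set.Ioo_subset_Icc_self hz))
    have hax : a < x := by simp [ha]; linarith
    have hxb : x < b := by simp [hb]; linarith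
    have hmemIoo : φ x ∈ Set.Ioo (φ a) (φ b) :=
      ⟨hmono (Set.left_mem_Icc.mpr (by linarith)) ⟨le_of_lt hax, le_of_lt hxb⟩ hax,
       hmono ⟨le_of_lt hax, le_of_lt hxb⟩ (Set.right_mem_Icc.mpr (by linarith)) hxb⟩
    have hsub : Set.Ioo (φ a) (φ b) ⊆ φ '' I := by
      have h1 : Set.Ioo (φ a) (φ b) ⊆ φ '' Set.Ioo a b :=
        intermediate_value_Ioo (by linarith) hcont
      exact h1.trans (Set.image_mono (fun z hz => hab (Set.Ioo_subset_Icc_self hz)))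
    exact mem_nhds_iff.mpr ⟨Set.Ioo (φ a) (φ b), hsub, isOpen_Ioo, hmemIoo⟩
  -- main computation
  rintro t ⟨x, hx, rfl⟩
  have hy0 : y x ≠ 0 := (hpos x hx).ne'
  have hev2 : deriv (fun s : ℝ => y (ψ s) ^ 3) =ᶠ[nhds (φ x)]
      (fun s => 3 * y (ψ s) * deriv y (ψ s)) := by
    filter_upwards [hnbhd x hx]
    rintro s ⟨x', hx', rfl⟩
    rw [hud x' hx', hinv x' hx']
  have hg : HasDerivAt (fun s => 3 * y (ψ s) * deriv y (ψ s))
      ((3 * (deriv y x * (1 / y x))) * deriv y x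
        + (3 * y x) * (deriv (deriv y) x * (1 / y x))) (φ x) := by
    have := ((hcomp x hx).const_mul 3).fun_mul (hcomp2 x hx)
    refine this.congr_deriv ?_ <;> rw [hinv x hx]
  have key : deriv (deriv (fun s : ℝ => y (ψ s) ^ 3)) (φ x)
      = (3 * (deriv y x * (1 / y x))) * deriv y x
        + (3 * y x) * (deriv (deriv y) x * (1 / y x)) := by
    rw [hev2.deriv_eq, hg.deriv]
  rw [key, hud x hx]
  have h := hode x hx
  field_simp at h ⊢
  nlinarith [h, sq_nonneg (y x)]
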